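/- If T is a nonempty positive word in increasing form, then the element of B₃ represented by T cannot be written as δ · P with P a (possibly empty) positive word; in other words, an increasing-form positive word is never left-divisible by δ in the positive monoid of B₃. -/

import Mathlib

/-- The band relations `a₂a₁ = a₃a₂ = a₁a₃`, with subscripts taken modulo 3
(the generator `a₃` is indexed by `0 : ZMod 3`). -/
def bandRels : Set (FreeGroup (ZMod 3)) :=
  { FreeGroup.of 2 * FreeGroup.of 1 * (FreeGroup.of 0 * FreeGroup.of 2)⁻¹,
    FreeGroup.of 0 * FreeGroup.of 2 * (FreeGroup.of 1 * FreeGroup.of 0)⁻¹ }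

/-- The band-presented group `⟨a₁, a₂, a₃ | a₂a₁ = a₃a₂ = a₁a₃⟩` (a model of `B₃`). -/
abbrev BandB3 := PresentedGroup bandRels

/-- The band generators `a i`, indexed by `ZMod 3` (so `a 0 = a₃`). -/
def a (i : ZMod 3) : BandB3 := PresentedGroup.of i

/-- The fundamental element `δ = a₂a₁ (= a₃a₂ = a₁a₃)`. -/
def δ : BandB3 := a 2 * a 1

/-- The positive word in increasing form with initial subscript `τ` and exponent
sequence `s = (s₁, …, s_t)`, namely `a_τ^{s₁} a_{τ+1}^{s₂} ⋯ a_{τ+t−1}^{s_t}`,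
with consecutive syllable subscripts increasing by 1 modulo 3. -/
def tailProd (τ : ZMod 3) (s : List ℕ) : BandB3 :=
  ((List.range s.length).map (fun i : ℕ => a (τ + (i : ZMod 3)) ^ s.getD i 0)).prod


namespace BandAux

inductive Sym : Type | X : Sym | Y1 : Sym | Y2 : Sym
deriving DecidableEq

open Sym

/-- kind: true for the order-2 letter, false for order-3 letters -/
def kind : Sym → Bool | X => true | Y1 => false | Y2 => false

/-- Reduced words of the free product C2 * C3 -/
def Red (l : List Sym) : Prop := List.Chain' (fun p q => kind p ≠ kind q) l

/-- left multiplication by x -/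
def mulx : List Sym → List Sym
  | X :: t => t
  | l => X :: l

/-- left multiplication by y -/
def muly : List Sym → List Sym
  | Y1 :: t => Y2 :: t
  | Y2 :: t => t
  | l => Y1 :: l

@[simp] lemma mulx_nil : mulx [] = [X] := rfl
@[simp] lemma mulx_X (t) : mulx (X :: t) = t := rfl
@[simp] lemma mulx_Y1 (t) : mulx (Y1 :: t) = X :: Y1 :: t := rfl
@[simp] lemma mulx_Y2 (t) : mulx (Y2 :: t) = X :: Y2 :: t := rfl
@[simp] lemma muly_nil : muly [] = [Y1] := rfl
@[simp] lemma muly_X (t) : muly (X :: t) = Y1 :: X :: t := rfl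
@[simp] lemma muly_Y1 (t) : muly (Y1 :: t) = Y2 :: t := rfl
@[simp] lemma muly_Y2 (t) : muly (Y2 :: t) = t := rfl

/-- number of x letters -/
def cX : List Sym → ℕ
  | [] => 0
  | X :: t => cX t + 1
  | _ :: t => cX t

@[simp] lemma cX_nil : cX [] = 0 := rfl
@[simp] lemma cX_X (t) : cX (X :: t) = cX t + 1 := rfl
@[simp] lemma cX_Y1 (t) : cX (Y1 :: t) = cX t := rfl
@[simp] lemma cX_Y2 (t) : cX (Y2 :: t) = cX t := rfl

lemma red_mulx {l} (h : Red l) : Red (mulx l) := by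
  cases l with
  | nil => exact List.isChain_singleton _
  | cons hd t =>
    cases hd <;> simp only [mulx_X, mulx_Y1, mulx_Y2]
    · exact (List.isChain_cons.mp h).2
    · exact List.isChain_cons.mpr ⟨by simp [kind], h⟩
    · exact List.isChain_cons.mpr ⟨by simp [kind], h⟩

lemma red_muly {l} (h : Red l) : Red (muly l) := by
  cases l with
  | nil => exact List.isChain_singleton _
  | cons hd t =>
    cases hd <;> simp only [muly_X, muly_Y1, muly_Y2]
    · exact List.isChain_cons.mpr ⟨by simp [kind], h⟩
    · rcases List.isChain_cons.mp h with ⟨h1, h2⟩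
      exact List.isChain_cons.mpr ⟨fun y hy => by simpa [kind] using h1 y hy, h2⟩
    · exact (List.isChain_cons.mp h).2

lemma mulx_mulx {l} (h : Red l) : mulx (mulx l) = l := by
  cases l with
  | nil => rfl
  | cons hd t =>
    cases hd
    · cases t with
      | nil => rfl
      | cons hd' t' =>
        rcases List.isChain_cons.mp h with ⟨h1, -⟩
        cases hd'
        · exact absurd (h1 X rfl) (by decide)
        · rfl
        · rfl
    · rfl
    · rfl

lemma muly3 {l} (h : Red l) : muly (muly (muly l)) = l := by
  cases l with
  | nil => rfl
  | cons hd t =>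
    cases hd
    · rfl
    · cases t with
      | nil => rfl
      | cons hd' t' =>
        rcases List.isChain_cons.mp h with ⟨h1, -⟩
        cases hd'
        · rfl
        · exact absurd (h1 Y1 rfl) (by decide)
        · exact absurd (h1 Y2 rfl) (by decide)
    · cases t with
      | nil => rfl
      | cons hd' t' =>
        rcases List.isChain_cons.mp h with ⟨h1, -⟩
        cases hd'
        · rfl
        · exact absurd (h1 Y1 rfl) (by decide)
        · exact absurd (h1 Y2 rfl) (by decide)

@[simp] lemma cX_muly (l) : cX (muly l) = cX l := by
  cases l with
  | nil => rfl
  | cons hd t => cases hd <;> simp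

lemma cX_mulx_le (l) : cX (mulx l) ≤ cX l + 1 := by
  cases l with
  | nil => simp
  | cons hd t => cases hd <;> simp <;> omega

end BandAux

namespace BandAux
open Sym

/-- the set of reduced words -/
def R : Type := { l : List Sym // Red l }

def px : Equiv.Perm R :=
  { toFun := fun r => ⟨mulx r.1, red_mulx r.2⟩
    invFun := fun r => ⟨mulx r.1, red_mulx r.2⟩
    left_inv := fun r => Subtype.ext (mulx_mulx r.2)
    right_inv := fun r => Subtype.ext (mulx_mulx r.2) }

def py : Equiv.Perm R :=
  { toFun := fun r => ⟨muly r.1, red_muly r.2⟩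
    invFun := fun r => ⟨muly (muly r.1), red_muly (red_muly r.2)⟩
    left_inv := fun r => Subtype.ext (muly3 r.2)
    right_inv := fun r => Subtype.ext (muly3 r.2) }

@[simp] lemma px_apply (r : R) : (px r).1 = mulx r.1 := rfl
@[simp] lemma py_apply (r : R) : (py r).1 = muly r.1 := rfl

lemma pxpx (g : Equiv.Perm R) : px * (px * g) = g := by
  rw [← mul_assoc]
  have : px * px = 1 := Equiv.ext fun r => Subtype.ext (mulx_mulx r.2)
  rw [this, one_mul]

lemma pypypy (g : Equiv.Perm R) : py * (py * (py * g)) = g := by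
  rw [← mul_assoc, ← mul_assoc]
  have : py * py * py = 1 := Equiv.ext fun r => Subtype.ext (muly3 r.2)
  rw [this, one_mul]

lemma pxpx1 : px * px = 1 := Equiv.ext fun r => Subtype.ext (mulx_mulx r.2)

/-- images of the generators: a 1 ↦ xy², a 2 ↦ y²x, a 0 ↦ yxy -/
def f : ZMod 3 → Equiv.Perm R := fun i =>
  if i = 1 then px * py * py else if i = 2 then py * py * px else py * px * py

lemma f1 : f 1 = px * py * py := rfl
lemma f2 : f 2 = py * py * px := by
  simp only [f]; rw [if_neg (by decide : ¬(2:ZMod 3)=1)]; simp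
lemma f0 : f 0 = py * px * py := by
  simp only [f]; rw [if_neg (by decide : ¬(0:ZMod 3)=1), if_neg (by decide : ¬(0:ZMod 3)=2)]

lemma key21 : f 2 * f 1 = py := by
  rw [f2, f1]; simp only [mul_assoc, pxpx, pypypy, pxpx1, mul_one]
lemma key02 : f 0 * f 2 = py := by
  rw [f0, f2]; simp only [mul_assoc, pxpx, pypypy, pxpx1, mul_one]
lemma key10 : f 1 * f 0 = py := by
  rw [f1, f0]; simp only [mul_assoc, pxpx, pypypy, pxpx1, mul_one]

lemma hrels : ∀ r ∈ bandRels, (FreeGroup.lift f) r = 1 := by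
  intro r hr
  rcases hr with rfl | rfl
  · simp only [map_mul, map_inv, FreeGroup.lift_apply_of, mul_inv_eq_one]
    rw [key21, key02]
  · simp only [map_mul, map_inv, FreeGroup.lift_apply_of, mul_inv_eq_one]
    rw [key10, key02]

/-- the representation -/
def φ : BandB3 →* Equiv.Perm R := PresentedGroup.toGroup hrels

@[simp] lemma φ_a (i : ZMod 3) : φ (a i) = f i := PresentedGroup.toGroup.of hrels

lemma φ_δ : φ δ = py := by
  rw [δ, map_mul, φ_a, φ_a, key21]

/-- the length homomorphism -/
def ℓ : BandB3 →* Multiplicative ℤ :=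
  PresentedGroup.toGroup (f := fun _ : ZMod 3 => Multiplicative.ofAdd (1 : ℤ)) (by
    intro r hr
    rcases hr with rfl | rfl <;>
      simp only [map_mul, map_inv, FreeGroup.lift_apply_of, mul_inv_eq_one])

@[simp] lemma ℓ_a (i : ZMod 3) : ℓ (a i) = Multiplicative.ofAdd (1 : ℤ) :=
  PresentedGroup.toGroup.of _

end BandAux

namespace BandAux
open Sym

/-- action of generator `a i` on words -/
def A : ZMod 3 → List Sym → List Sym := fun i w =>
  if i = 1 then mulx (muly (muly w))
  else if i = 2 then muly (muly (mulx w))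
  else muly (mulx (muly w))

lemma A1 (w) : A 1 w = mulx (muly (muly w)) := rfl
lemma A2 (w) : A 2 w = muly (muly (mulx w)) := by
  simp only [A]; rw [if_neg (by decide : ¬(2:ZMod 3)=1)]; simp
lemma A0 (w) : A 0 w = muly (mulx (muly w)) := by
  simp only [A]
  rw [if_neg (by decide : ¬(0:ZMod 3)=1), if_neg (by decide : ¬(0:ZMod 3)=2)]

lemma zcases : ∀ i : ZMod 3, i = 0 ∨ i = 1 ∨ i = 2 := by decide

lemma φa_apply (i : ZMod 3) (r : R) : (φ (a i) r).1 = A i r.1 := by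
  rcases zcases i with rfl | rfl | rfl
  · rw [φ_a, f0, A0]; rfl
  · rw [φ_a, f1, A1]; rfl
  · rw [φ_a, f2, A2]; rfl

lemma cX_A_le (i : ZMod 3) (w : List Sym) : cX (A i w) ≤ cX w + 1 := by
  rcases zcases i with rfl | rfl | rfl
  · rw [A0]; simpa using cX_mulx_le (muly w)
  · rw [A1]; simpa using cX_mulx_le (muly (muly w))
  · rw [A2]; simpa using cX_mulx_le w

/-- pattern at the start of (the image of) an increasing word beginning with `a i` -/
def Good : ZMod 3 → List Sym → Prop := fun i w =>
  if i = 1 then ∃ t, w = X :: t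
  else if i = 2 then ∃ t, w = Y2 :: X :: t
  else ∃ t, w = Y1 :: X :: t

lemma Good1 (w) : Good 1 w ↔ ∃ t, w = X :: t := Iff.rfl
lemma Good2 (w) : Good 2 w ↔ ∃ t, w = Y2 :: X :: t := by
  simp only [Good]; rw [if_neg (by decide : ¬(2:ZMod 3)=1)]; simp
lemma Good0 (w) : Good 0 w ↔ ∃ t, w = Y1 :: X :: t := by
  simp only [Good]
  rw [if_neg (by decide : ¬(0:ZMod 3)=1), if_neg (by decide : ¬(0:ZMod 3)=2)]

def Inv (i : ZMod 3) (n : ℕ) (w : List Sym) : Prop :=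
  Red w ∧ cX w = n ∧ Good i w

lemma red_cons_cons {p q : Sym} {t : List Sym} (h : kind p ≠ kind q)
    (h2 : Red (q :: t)) : Red (p :: q :: t) := List.isChain_cons_cons.mpr ⟨h, h2⟩

lemma red_tail {p : Sym} {t : List Sym} (h : Red (p :: t)) : Red t :=
  (List.isChain_cons.mp h).2

lemma red_nil : Red [] := List.isChain_nil
lemma red_single (p : Sym) : Red [p] := List.isChain_singleton p

lemma invBase (i : ZMod 3) : Inv i 1 (A i []) := by
  rcases zcases i with rfl | rfl | rfl
  · rw [A0]; simp only [muly_nil, mulx_Y1, muly_X]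
    exact ⟨red_cons_cons (by decide) (red_cons_cons (by decide) (red_single _)),
      rfl, (Good0 _).mpr ⟨[Y1], rfl⟩⟩
  · rw [A1]; simp only [muly_nil, muly_Y1, mulx_Y2]
    exact ⟨red_cons_cons (by decide) (red_single _),
      rfl, (Good1 _).mpr ⟨[Y2], rfl⟩⟩
  · rw [A2]; simp only [mulx_nil, muly_X, muly_Y1]
    exact ⟨red_cons_cons (by decide) (red_single _),
      rfl, (Good2 _).mpr ⟨[], rfl⟩⟩

lemma invStep {i : ZMod 3} {n : ℕ} {w : List Sym} (h : Inv i n w) :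
    Inv i (n + 1) (A i w) := by
  obtain ⟨hr, hc, hg⟩ := h
  rcases zcases i with rfl | rfl | rfl
  · obtain ⟨t, rfl⟩ := (Good0 _).mp hg
    rw [A0]; simp only [muly_Y1, mulx_Y2, muly_X]
    refine ⟨?_, by simp [← hc], (Good0 _).mpr ⟨Y2 :: X :: t, rfl⟩⟩
    exact red_cons_cons (by decide) (red_cons_cons (by decide)
      (red_cons_cons (by decide) (red_tail hr)))
  · obtain ⟨t, rfl⟩ := (Good1 _).mp hg
    rw [A1]; simp only [muly_X, muly_Y1, mulx_Y2]
    refine ⟨?_, by simp [← hc], (Good1 _).mpr ⟨Y2 :: X :: t, rfl⟩⟩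
    exact red_cons_cons (by decide) (red_cons_cons (by decide) hr)
  · obtain ⟨t, rfl⟩ := (Good2 _).mp hg
    rw [A2]; simp only [mulx_Y2, muly_X, muly_Y1]
    refine ⟨?_, by simp [← hc], (Good2 _).mpr ⟨Y2 :: X :: t, rfl⟩⟩
    exact red_cons_cons (by decide) (red_cons_cons (by decide) hr)

lemma invBoundary {i : ZMod 3} {n : ℕ} {w : List Sym} (h : Inv (i + 1) n w) :
    Inv i (n + 1) (A i w) := by
  obtain ⟨hr, hc, hg⟩ := h
  rcases zcases i with rfl | rfl | rfl
  · rw [show (0 : ZMod 3) + 1 = 1 from by decide] at hg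
    obtain ⟨t, rfl⟩ := (Good1 _).mp hg
    rw [A0]; simp only [muly_X, mulx_Y1, muly_X]
    refine ⟨?_, by simp [← hc], (Good0 _).mpr ⟨Y1 :: X :: t, rfl⟩⟩
    exact red_cons_cons (by decide) (red_cons_cons (by decide)
      (red_cons_cons (by decide) hr))
  · rw [show (1 : ZMod 3) + 1 = 2 from by decide] at hg
    obtain ⟨t, rfl⟩ := (Good2 _).mp hg
    rw [A1]; simp only [muly_Y2, muly_X, mulx_Y1]
    refine ⟨?_, by simp [← hc], (Good1 _).mpr ⟨Y1 :: X :: t, rfl⟩⟩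
    exact red_cons_cons (by decide) (red_cons_cons (by decide) (red_tail hr))
  · rw [show (2 : ZMod 3) + 1 = 0 from by decide] at hg
    obtain ⟨t, rfl⟩ := (Good0 _).mp hg
    rw [A2]; simp only [mulx_Y1, muly_X, muly_Y1]
    refine ⟨?_, by simp [← hc], (Good2 _).mpr ⟨Y1 :: X :: t, rfl⟩⟩
    exact red_cons_cons (by decide) (red_cons_cons (by decide) hr)

/-- the flattened list of subscripts of an increasing word -/
def flat : List ℕ → ZMod 3 → List (ZMod 3)
  | [], _ => []
  | k :: rest, τ => List.replicate k τ ++ flat rest (τ + 1)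

lemma length_flat : ∀ (s : List ℕ) (τ), (flat s τ).length = s.sum
  | [], _ => rfl
  | k :: rest, τ => by simp [flat, length_flat rest (τ + 1)]

lemma tailProd_cons (τ : ZMod 3) (k : ℕ) (rest : List ℕ) :
    tailProd τ (k :: rest) = a τ ^ k * tailProd (τ + 1) rest := by
  simp only [tailProd, List.length_cons, List.range_succ_eq_map, List.map_cons,
    List.map_map, List.prod_cons]
  congr 1
  · simp
  · congr 1
    apply List.map_congr_left
    intro i _
    simp only [Function.comp_apply, Nat.succ_eq_add_one, List.getD_cons_succ]
    congr 2
    push_cast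
    ring

lemma tailProd_eq_flat : ∀ (s : List ℕ) (τ), tailProd τ s = ((flat s τ).map a).prod
  | [], _ => by simp [tailProd, flat]
  | k :: rest, τ => by
    rw [tailProd_cons, flat, List.map_append, List.prod_append,
      tailProd_eq_flat rest (τ + 1), List.map_replicate, List.prod_replicate]

lemma φ_list_apply : ∀ (L : List (ZMod 3)) (r : R),
    (φ (L.map a).prod r).1 = L.foldr A r.1
  | [], r => by simp
  | i :: L, r => by
    simp only [List.map_cons, List.prod_cons, map_mul, Equiv.Perm.mul_apply,
      List.foldr_cons]
    rw [φa_apply, φ_list_apply L r]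

lemma cX_foldr_le : ∀ (L : List (ZMod 3)) (w : List Sym),
    cX (L.foldr A w) ≤ cX w + L.length
  | [], w => by simp
  | i :: L, w => by
    simp only [List.foldr_cons, List.length_cons]
    calc cX (A i (L.foldr A w)) ≤ cX (L.foldr A w) + 1 := cX_A_le _ _
    _ ≤ cX w + L.length + 1 := by have := cX_foldr_le L w; omega
    _ = cX w + (L.length + 1) := by ring

lemma inv_rep : ∀ (m : ℕ) (τ : ZMod 3) {n : ℕ} {w : List Sym},
    Inv (τ + 1) n w → Inv τ (n + (m + 1)) (List.foldr A w (List.replicate (m + 1) τ))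
  | 0, τ, n, w, h => by simpa using invBoundary h
  | m + 1, τ, n, w, h => by
    have := invStep (inv_rep m τ h)
    simpa [List.replicate_succ (n := m + 1), Nat.add_assoc] using this

lemma inv_rep_base : ∀ (m : ℕ) (τ : ZMod 3),
    Inv τ (m + 1) (List.foldr A [] (List.replicate (m + 1) τ))
  | 0, τ => by simpa using invBase τ
  | m + 1, τ => by
    have := invStep (inv_rep_base m τ)
    simpa [List.replicate_succ (n := m + 1)] using this

lemma inv_flat : ∀ (s : List ℕ) (τ : ZMod 3), s ≠ [] → (∀ x ∈ s, 1 ≤ x) →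
    Inv τ s.sum ((flat s τ).foldr A [])
  | [], _, hne, _ => absurd rfl hne
  | k :: rest, τ, _, hpos => by
    obtain ⟨m, rfl⟩ : ∃ m, k = m + 1 := by
      have := hpos k (by simp); exact ⟨k - 1, by omega⟩
    rw [flat, List.foldr_append]
    rcases eq_or_ne rest [] with rfl | hrest
    · simpa [Nat.add_comm, flat] using inv_rep_base m τ
    · have ih := inv_flat rest (τ + 1) hrest (fun x hx => hpos x (by simp [hx]))
      have := inv_rep m τ ih
      simpa [Nat.add_comm] using this

end BandAux

open BandAux in
/-- A nonempty positive word in increasing form is never left-divisible by `δ`: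
it cannot be written as `δ · P` with `P` a (possibly empty) positive word, i.e. a
product of band generators with no inverses (recorded as the list of its
subscripts). -/
theorem increasing_form_not_delta_divisible (τ : ZMod 3) (s : List ℕ)
    (hne : s ≠ []) (hpos : ∀ x ∈ s, 1 ≤ x) :
    ¬ ∃ L : List (ZMod 3), tailProd τ s = δ * (L.map a).prod := by
  rintro ⟨L, hEq⟩
  -- length comparison
  have hlen : ∀ (M : List (ZMod 3)), ℓ (M.map a).prod =
      Multiplicative.ofAdd (M.length : ℤ) := by
    intro M
    induction M with
    | nil => simp
    | cons i M ih =>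
      simp only [List.map_cons, List.prod_cons, map_mul, ℓ_a, ih, List.length_cons]
      rw [← ofAdd_add]
      push_cast
      ring_nf
  have hL1 : ℓ (tailProd τ s) = Multiplicative.ofAdd ((s.sum : ℤ)) := by
    rw [tailProd_eq_flat, hlen, length_flat]
  have hL2 : ℓ (δ * (L.map a).prod) = Multiplicative.ofAdd ((2 : ℤ) + L.length) := by
    rw [map_mul, hlen, δ, map_mul, ℓ_a, ℓ_a, ← ofAdd_add, ← ofAdd_add]
    norm_num
  have hsum : (s.sum : ℤ) = 2 + L.length := by
    have := hL1.symm.trans ((congrArg ℓ hEq).trans hL2)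
    exact Multiplicative.ofAdd.injective this
  -- x-count comparison
  set r0 : R := ⟨[], List.isChain_nil⟩ with hr0
  have hval : (φ (tailProd τ s) r0).1 = (φ (δ * (L.map a).prod) r0).1 := by
    rw [hEq]
  have hLHS : cX ((φ (tailProd τ s) r0).1) = s.sum := by
    rw [tailProd_eq_flat, φ_list_apply]
    exact (inv_flat s τ hne hpos).2.1
  have hRHS : cX ((φ (δ * (L.map a).prod) r0).1) ≤ L.length := by
    rw [map_mul, Equiv.Perm.mul_apply, φ_δ, py_apply, cX_muly, φ_list_apply]
    simpa using cX_foldr_le L []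
  rw [hval] at hLHS
  omega
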